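/- If E_i(t,x,x',x'') are the Euler-Lagrange expressions of a smooth Lagrangian L(t,x,x'), then for all i,j: ∂E_i/∂x_j - ∂E_j/∂x_i = (1/2) D_t(∂E_i/∂x'_j - ∂E_j/∂x'_i), where D_t = ∂/∂t + Σ_k x'_k ∂/∂x_k + Σ_k x''_k ∂/∂x'_k. -/

import Mathlib

open Function

variable {n : ℕ}

/-- Partial derivative w.r.t. time of a function of (t, x, x'). -/
noncomputable def pT3 (f : ℝ → (Fin n → ℝ) → (Fin n → ℝ) → ℝ) (t : ℝ) (x v : Fin n → ℝ) : ℝ :=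
  deriv (fun s => f s x v) t

/-- Partial derivative w.r.t. x_i of a function of (t, x, x'). -/
noncomputable def pX3 (f : ℝ → (Fin n → ℝ) → (Fin n → ℝ) → ℝ) (i : Fin n) (t : ℝ)
    (x v : Fin n → ℝ) : ℝ :=
  deriv (fun s => f t (Function.update x i s) v) (x i)

/-- Partial derivative w.r.t. x'_i of a function of (t, x, x'). -/
noncomputable def pV3 (f : ℝ → (Fin n → ℝ) → (Fin n → ℝ) → ℝ) (i : Fin n) (t : ℝ)
    (x v : Fin n → ℝ) : ℝ :=
  deriv (fun s => f t x (Function.update v i s)) (v i)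

/-- Partial derivative w.r.t. time of a function of (t, x, x', x''). -/
noncomputable def pT4 (F : ℝ → (Fin n → ℝ) → (Fin n → ℝ) → (Fin n → ℝ) → ℝ) (t : ℝ)
    (x v a : Fin n → ℝ) : ℝ :=
  deriv (fun s => F s x v a) t

/-- Partial derivative w.r.t. x_i of a function of (t, x, x', x''). -/
noncomputable def pX4 (F : ℝ → (Fin n → ℝ) → (Fin n → ℝ) → (Fin n → ℝ) → ℝ) (i : Fin n) (t : ℝ)
    (x v a : Fin n → ℝ) : ℝ :=
  deriv (fun s => F t (Function.update x i s) v a) (x i)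

/-- Partial derivative w.r.t. x'_i of a function of (t, x, x', x''). -/
noncomputable def pV4 (F : ℝ → (Fin n → ℝ) → (Fin n → ℝ) → (Fin n → ℝ) → ℝ) (i : Fin n) (t : ℝ)
    (x v a : Fin n → ℝ) : ℝ :=
  deriv (fun s => F t x (Function.update v i s) a) (v i)

/-- Partial derivative w.r.t. x''_i of a function of (t, x, x', x''). -/
noncomputable def pA4 (F : ℝ → (Fin n → ℝ) → (Fin n → ℝ) → (Fin n → ℝ) → ℝ) (i : Fin n) (t : ℝ)
    (x v a : Fin n → ℝ) : ℝ :=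
  deriv (fun s => F t x v (Function.update a i s)) (a i)

/-- The Euler–Lagrange expression E_i of a Lagrangian L(t,x,x'), viewed as a function of
(t, x, x', x''):  E_i = ∂²L/∂x'_i∂t + Σ_j (∂²L/∂x'_i∂x_j) x'_j + Σ_j (∂²L/∂x'_i∂x'_j) x''_j
  - ∂L/∂x_i. -/
noncomputable def EulerLagrange (L : ℝ → (Fin n → ℝ) → (Fin n → ℝ) → ℝ) (i : Fin n) (t : ℝ)
    (x v a : Fin n → ℝ) : ℝ :=
  pT3 (pV3 L i) t x v + (∑ j, pX3 (pV3 L i) j t x v * v j)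
    + (∑ j, pV3 (pV3 L i) j t x v * a j) - pX3 L i t x v

/-- The total time derivative D_t = ∂/∂t + Σ_k x'_k ∂/∂x_k + Σ_k x''_k ∂/∂x'_k acting on a
function of (t, x, x', x''). -/
noncomputable def Dt4 (F : ℝ → (Fin n → ℝ) → (Fin n → ℝ) → (Fin n → ℝ) → ℝ) (t : ℝ)
    (x v a : Fin n → ℝ) : ℝ :=
  pT4 F t x v a + (∑ k, v k * pX4 F k t x v a) + (∑ k, a k * pV4 F k t x v a)

/-- The total time derivative including the Σ_k x'''_k ∂/∂x''_k term, with x''' = b a free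
variable. -/
noncomputable def Dt5 (F : ℝ → (Fin n → ℝ) → (Fin n → ℝ) → (Fin n → ℝ) → ℝ) (b : Fin n → ℝ)
    (t : ℝ) (x v a : Fin n → ℝ) : ℝ :=
  Dt4 F t x v a + ∑ k, b k * pA4 F k t x v a

section HelmholtzAux

/-- Abbreviation for the base space ℝ × ℝⁿ × ℝⁿ. -/
abbrev HEE (n : ℕ) := ℝ × (Fin n → ℝ) × (Fin n → ℝ)

/-- Directional derivative operator. -/
noncomputable def HD1 (g : HEE n → ℝ) (w : HEE n) : HEE n → ℝ := fun p => fderiv ℝ g p w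

noncomputable def He0 (n : ℕ) : HEE n := (1, 0, 0)
noncomputable def HeX (i : Fin n) : HEE n := (0, Pi.single i 1, 0)
noncomputable def HeV (i : Fin n) : HEE n := (0, 0, Pi.single i 1)

lemma contDiff_HD1 {g : HEE n → ℝ} {m N : WithTop ℕ∞} (h : ContDiff ℝ N g) (hm : m + 1 ≤ N)
    (w : HEE n) : ContDiff ℝ m (HD1 g w) :=
  (h.fderiv_right hm).clm_apply contDiff_const

lemma HD1_sym {g : HEE n → ℝ} (h : ContDiff ℝ 2 g) (u w : HEE n) :
    HD1 (HD1 g u) w = HD1 (HD1 g w) u := by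
  funext p
  have hd : ∀ y, HasFDerivAt g (fderiv ℝ g y) y := fun y =>
    ((h.differentiable (by norm_num)) y).hasFDerivAt
  have hd1 : ContDiff ℝ 1 (fderiv ℝ g) := h.fderiv_right le_rfl
  have hd2 : HasFDerivAt (fderiv ℝ g) (fderiv ℝ (fderiv ℝ g) p) p :=
    ((hd1.differentiable (by norm_num)) p).hasFDerivAt
  have key : ∀ z : HEE n, fderiv ℝ (fun q => fderiv ℝ g q z) p
      = (fderiv ℝ (fderiv ℝ g) p).flip z := by
    intro z
    rw [fderiv_clm_apply hd2.differentiableAt (differentiableAt_const z)]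
    simp
  show fderiv ℝ (fun q => fderiv ℝ g q u) p w = fderiv ℝ (fun q => fderiv ℝ g q w) p u
  rw [key u, key w]
  simpa using second_derivative_symmetric hd hd2 w u

variable {t : ℝ} {x v : Fin n → ℝ}

lemma hasDerivAt_slice_T {G : HEE n → ℝ} (hG : DifferentiableAt ℝ G (t, x, v)) :
    HasDerivAt (fun s => G (s, x, v)) (HD1 G (He0 n) (t, x, v)) t :=
  hG.hasFDerivAt.comp_hasDerivAt t ((hasDerivAt_id t).prodMk (hasDerivAt_const t (x, v)))

lemma hasDerivAt_slice_X {G : HEE n → ℝ} (hG : DifferentiableAt ℝ G (t, x, v)) (i : Fin n) :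
    HasDerivAt (fun s => G (t, Function.update x i s, v)) (HD1 G (HeX i) (t, x, v)) (x i) := by
  have hG' : DifferentiableAt ℝ G (t, Function.update x i (x i), v) := by
    rw [Function.update_eq_self]; exact hG
  have h := hG'.hasFDerivAt.comp_hasDerivAt (x := x i)
    ((hasDerivAt_const (x i) t).prodMk ((hasDerivAt_update x i (x i)).prodMk
      (hasDerivAt_const (x i) v)))
  simpa [Function.update_eq_self, HD1, HeX, Function.comp_def] using h

lemma hasDerivAt_slice_V {G : HEE n → ℝ} (hG : DifferentiableAt ℝ G (t, x, v)) (i : Fin n) :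
    HasDerivAt (fun s => G (t, x, Function.update v i s)) (HD1 G (HeV i) (t, x, v)) (v i) := by
  have hG' : DifferentiableAt ℝ G (t, x, Function.update v i (v i)) := by
    rw [Function.update_eq_self]; exact hG
  have h := hG'.hasFDerivAt.comp_hasDerivAt (x := v i)
    ((hasDerivAt_const (v i) t).prodMk ((hasDerivAt_const (v i) x).prodMk
      (hasDerivAt_update v i (v i))))
  simpa [Function.update_eq_self, HD1, HeV, Function.comp_def] using h

lemma hasDerivAt_update_mul {g : HEE n → ℝ} (hg : Differentiable ℝ g) (j k : Fin n)
    (t : ℝ) (x v : Fin n → ℝ) :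
    HasDerivAt (fun s => g (t, x, Function.update v j s) * Function.update v j s k)
      (HD1 g (HeV j) (t, x, v) * v k + (if k = j then g (t, x, v) else 0)) (v j) := by
  have h2 : HasDerivAt (fun s => Function.update v j s k) (if k = j then (1:ℝ) else 0) (v j) := by
    by_cases hk : k = j
    · subst hk; simpa [Function.update_self] using hasDerivAt_id' (v k)
    · simpa [Function.update_of_ne hk, hk] using hasDerivAt_const (v j) (v k)
  have h := (hasDerivAt_slice_V (G := g) (hg (t, x, v)) j).mul h2
  refine h.congr_deriv ?_
  by_cases hk : k = j <;> simp [hk, Function.update_eq_self]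

section OfForm

variable (g0 g3 : HEE n → ℝ) (g1 g2 : Fin n → HEE n → ℝ)
variable (hg0 : Differentiable ℝ g0) (hg3 : Differentiable ℝ g3)
variable (hg1 : ∀ k, Differentiable ℝ (g1 k)) (hg2 : ∀ k, Differentiable ℝ (g2 k))
variable (Efun : ℝ → (Fin n → ℝ) → (Fin n → ℝ) → (Fin n → ℝ) → ℝ)
variable (hE : ∀ t x v a, Efun t x v a
  = g0 (t, x, v) + (∑ k, g1 k (t, x, v) * v k) + (∑ k, g2 k (t, x, v) * a k) - g3 (t, x, v))

include hg0 hg3 hg1 hg2 hE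

lemma pT4_of_form (t : ℝ) (x v a : Fin n → ℝ) :
    pT4 Efun t x v a = HD1 g0 (He0 n) (t, x, v)
      + (∑ k, HD1 (g1 k) (He0 n) (t, x, v) * v k)
      + (∑ k, HD1 (g2 k) (He0 n) (t, x, v) * a k) - HD1 g3 (He0 n) (t, x, v) := by
  unfold pT4
  simp only [hE]
  refine HasDerivAt.deriv ?_
  exact (((hasDerivAt_slice_T (hg0 _)).add
    (HasDerivAt.fun_sum fun k _ => (hasDerivAt_slice_T ((hg1 k) _)).mul_const (v k))).add
    (HasDerivAt.fun_sum fun k _ => (hasDerivAt_slice_T ((hg2 k) _)).mul_const (a k))).sub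
    (hasDerivAt_slice_T (hg3 _))

lemma pX4_of_form (j : Fin n) (t : ℝ) (x v a : Fin n → ℝ) :
    pX4 Efun j t x v a = HD1 g0 (HeX j) (t, x, v)
      + (∑ k, HD1 (g1 k) (HeX j) (t, x, v) * v k)
      + (∑ k, HD1 (g2 k) (HeX j) (t, x, v) * a k) - HD1 g3 (HeX j) (t, x, v) := by
  unfold pX4
  simp only [hE]
  refine HasDerivAt.deriv ?_
  exact (((hasDerivAt_slice_X (hg0 _) j).add
    (HasDerivAt.fun_sum fun k _ => (hasDerivAt_slice_X ((hg1 k) _) j).mul_const (v k))).add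
    (HasDerivAt.fun_sum fun k _ => (hasDerivAt_slice_X ((hg2 k) _) j).mul_const (a k))).sub
    (hasDerivAt_slice_X (hg3 _) j)

lemma pV4_of_form (j : Fin n) (t : ℝ) (x v a : Fin n → ℝ) :
    pV4 Efun j t x v a = HD1 g0 (HeV j) (t, x, v)
      + ((∑ k, HD1 (g1 k) (HeV j) (t, x, v) * v k) + g1 j (t, x, v))
      + (∑ k, HD1 (g2 k) (HeV j) (t, x, v) * a k) - HD1 g3 (HeV j) (t, x, v) := by
  unfold pV4
  simp only [hE]
  have hmid : HasDerivAt (fun s => ∑ k, g1 k (t, x, Function.update v j s)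
        * Function.update v j s k)
      ((∑ k, HD1 (g1 k) (HeV j) (t, x, v) * v k) + g1 j (t, x, v)) (v j) := by
    have h := HasDerivAt.fun_sum fun k (_ : k ∈ Finset.univ) => hasDerivAt_update_mul (hg1 k) j k t x v
    refine h.congr_deriv ?_
    rw [Finset.sum_add_distrib]
    congr 1
    simp
  refine HasDerivAt.deriv ?_
  exact (((hasDerivAt_slice_V (hg0 _) j).add hmid).add
    (HasDerivAt.fun_sum fun k _ => (hasDerivAt_slice_V ((hg2 k) _) j).mul_const (a k))).sub
    (hasDerivAt_slice_V (hg3 _) j)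

end OfForm


/-- Uncurried Lagrangian. -/
noncomputable def uncL (L : ℝ → (Fin n → ℝ) → (Fin n → ℝ) → ℝ) : HEE n → ℝ :=
  fun p => L p.1 p.2.1 p.2.2

end HelmholtzAux

/-- H2 is necessary: the Euler–Lagrange expressions of a C⁴ Lagrangian satisfy
∂E_i/∂x_j - ∂E_j/∂x_i = (1/2) D_t(∂E_i/∂x'_j - ∂E_j/∂x'_i). -/
theorem helmholtz_H2_necessary (n : ℕ) (L : ℝ → (Fin n → ℝ) → (Fin n → ℝ) → ℝ)
    (hL : ContDiff ℝ 4 (fun p : ℝ × (Fin n → ℝ) × (Fin n → ℝ) => L p.1 p.2.1 p.2.2)) :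
    ∀ (i j : Fin n) (t : ℝ) (x v a : Fin n → ℝ),
      pX4 (EulerLagrange L i) j t x v a - pX4 (EulerLagrange L j) i t x v a
        = (1 / 2) * Dt4 (fun t x v a =>
            pV4 (EulerLagrange L i) j t x v a - pV4 (EulerLagrange L j) i t x v a) t x v a := by

  intro i j t x v a
  have hF : ContDiff ℝ 4 (uncL L) := hL
  have dF : Differentiable ℝ (uncL L) := hF.differentiable (by norm_num)
  have h3 : ∀ w, ContDiff ℝ 3 (HD1 (uncL L) w) := fun w => contDiff_HD1 hF (by norm_num) w
  have h2 : ∀ u w, ContDiff ℝ 2 (HD1 (HD1 (uncL L) u) w) := fun u w =>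
    contDiff_HD1 (h3 u) (by norm_num) w
  have d3 : ∀ w, Differentiable ℝ (HD1 (uncL L) w) := fun w => (h3 w).differentiable (by norm_num)
  have d2 : ∀ u w, Differentiable ℝ (HD1 (HD1 (uncL L) u) w) := fun u w =>
    (h2 u w).differentiable (by norm_num)
  have s2 : ∀ u w : HEE n, HD1 (HD1 (uncL L) u) w = HD1 (HD1 (uncL L) w) u := fun u w =>
    HD1_sym (hF.of_le (by norm_num)) u w
  have s23 : ∀ u w z : HEE n, HD1 (HD1 (HD1 (uncL L) u) w) z = HD1 (HD1 (HD1 (uncL L) u) z) w :=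
    fun u w z => HD1_sym ((h3 u).of_le (by norm_num)) w z
  have s12 : ∀ u w z : HEE n, HD1 (HD1 (HD1 (uncL L) u) w) z = HD1 (HD1 (HD1 (uncL L) w) u) z :=
    fun u w z => by rw [s2 u w]
  have s13 : ∀ u w z : HEE n, HD1 (HD1 (HD1 (uncL L) u) w) z = HD1 (HD1 (HD1 (uncL L) z) w) u :=
    fun u w z => by rw [s23 u w z, s12 u z w, s23 z u w]
  have hpV3 : ∀ (m : Fin n) (t : ℝ) (x v : Fin n → ℝ),
      pV3 L m t x v = HD1 (uncL L) (HeV m) (t, x, v) := by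
    intro m t x v
    exact (hasDerivAt_slice_V (G := uncL L) (dF (t, x, v)) m).deriv
  have hEL : ∀ (m : Fin n) (t : ℝ) (x v a : Fin n → ℝ), EulerLagrange L m t x v a
      = HD1 (HD1 (uncL L) (HeV m)) (He0 n) (t, x, v)
        + (∑ k, HD1 (HD1 (uncL L) (HeV m)) (HeX k) (t, x, v) * v k)
        + (∑ k, HD1 (HD1 (uncL L) (HeV m)) (HeV k) (t, x, v) * a k)
        - HD1 (uncL L) (HeX m) (t, x, v) := by
    intro m t x v a
    have c1 : pT3 (pV3 L m) t x v = HD1 (HD1 (uncL L) (HeV m)) (He0 n) (t, x, v) := by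
      unfold pT3
      rw [show (fun s => pV3 L m s x v) = fun s => HD1 (uncL L) (HeV m) (s, x, v) from
        funext fun s => hpV3 m s x v]
      exact (hasDerivAt_slice_T ((d3 (HeV m)) _)).deriv
    have c2 : ∀ k, pX3 (pV3 L m) k t x v = HD1 (HD1 (uncL L) (HeV m)) (HeX k) (t, x, v) := by
      intro k
      unfold pX3
      rw [show (fun s => pV3 L m t (Function.update x k s) v)
          = fun s => HD1 (uncL L) (HeV m) (t, Function.update x k s, v) from
        funext fun s => hpV3 m t _ v]
      exact (hasDerivAt_slice_X ((d3 (HeV m)) _) k).deriv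
    have c3 : ∀ k, pV3 (pV3 L m) k t x v = HD1 (HD1 (uncL L) (HeV m)) (HeV k) (t, x, v) := by
      intro k
      show deriv (fun s => pV3 L m t x (Function.update v k s)) (v k) = _
      rw [show (fun s => pV3 L m t x (Function.update v k s))
          = fun s => HD1 (uncL L) (HeV m) (t, x, Function.update v k s) from
        funext fun s => hpV3 m t x _]
      exact (hasDerivAt_slice_V ((d3 (HeV m)) _) k).deriv
    have c4 : pX3 L m t x v = HD1 (uncL L) (HeX m) (t, x, v) :=
      (hasDerivAt_slice_X (G := uncL L) (dF (t, x, v)) m).deriv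
    unfold EulerLagrange
    simp only [c1, c2, c3, c4]
  -- expansions of the four partial derivatives of the Euler-Lagrange expressions
  have hXexp : ∀ (m mm : Fin n) (t : ℝ) (x v a : Fin n → ℝ),
      pX4 (EulerLagrange L m) mm t x v a
        = HD1 (HD1 (HD1 (uncL L) (HeV m)) (He0 n)) (HeX mm) (t, x, v)
          + (∑ k, HD1 (HD1 (HD1 (uncL L) (HeV m)) (HeX k)) (HeX mm) (t, x, v) * v k)
          + (∑ k, HD1 (HD1 (HD1 (uncL L) (HeV m)) (HeV k)) (HeX mm) (t, x, v) * a k)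
          - HD1 (HD1 (uncL L) (HeX m)) (HeX mm) (t, x, v) := fun m mm t x v a =>
    pX4_of_form (HD1 (HD1 (uncL L) (HeV m)) (He0 n)) (HD1 (uncL L) (HeX m))
      (fun k => HD1 (HD1 (uncL L) (HeV m)) (HeX k)) (fun k => HD1 (HD1 (uncL L) (HeV m)) (HeV k))
      (d2 _ _) (d3 _) (fun k => d2 _ _) (fun k => d2 _ _) (EulerLagrange L m) (hEL m) mm t x v a
  have hVexp : ∀ (m mm : Fin n) (t : ℝ) (x v a : Fin n → ℝ),
      pV4 (EulerLagrange L m) mm t x v a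
        = HD1 (HD1 (HD1 (uncL L) (HeV m)) (He0 n)) (HeV mm) (t, x, v)
          + ((∑ k, HD1 (HD1 (HD1 (uncL L) (HeV m)) (HeX k)) (HeV mm) (t, x, v) * v k)
            + HD1 (HD1 (uncL L) (HeV m)) (HeX mm) (t, x, v))
          + (∑ k, HD1 (HD1 (HD1 (uncL L) (HeV m)) (HeV k)) (HeV mm) (t, x, v) * a k)
          - HD1 (HD1 (uncL L) (HeX m)) (HeV mm) (t, x, v) := fun m mm t x v a =>
    pV4_of_form (HD1 (HD1 (uncL L) (HeV m)) (He0 n)) (HD1 (uncL L) (HeX m))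
      (fun k => HD1 (HD1 (uncL L) (HeV m)) (HeX k)) (fun k => HD1 (HD1 (uncL L) (HeV m)) (HeV k))
      (d2 _ _) (d3 _) (fun k => d2 _ _) (fun k => d2 _ _) (EulerLagrange L m) (hEL m) mm t x v a
  -- the difference of the velocity-derivatives
  have hVdiff : ∀ (t : ℝ) (x v a : Fin n → ℝ),
      pV4 (EulerLagrange L i) j t x v a - pV4 (EulerLagrange L j) i t x v a
        = 2 * (HD1 (HD1 (uncL L) (HeV i)) (HeX j) (t, x, v)
            - HD1 (HD1 (uncL L) (HeV j)) (HeX i) (t, x, v)) := by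
    intro t x v a
    rw [hVexp i j t x v a, hVexp j i t x v a]
    rw [s13 (HeV j) (He0 n) (HeV i)]
    have r1 : ∀ k, HD1 (HD1 (HD1 (uncL L) (HeV j)) (HeX k)) (HeV i)
        = HD1 (HD1 (HD1 (uncL L) (HeV i)) (HeX k)) (HeV j) := fun k => s13 (HeV j) (HeX k) (HeV i)
    have r2 : ∀ k, HD1 (HD1 (HD1 (uncL L) (HeV j)) (HeV k)) (HeV i)
        = HD1 (HD1 (HD1 (uncL L) (HeV i)) (HeV k)) (HeV j) := fun k => s13 (HeV j) (HeV k) (HeV i)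
    simp only [r1, r2, s2 (HeX i) (HeV j), s2 (HeX j) (HeV i)]
    ring
  -- derivative of the difference
  have hMder : ∀ (w q : HEE n),
      HD1 (fun p => HD1 (HD1 (uncL L) (HeV i)) (HeX j) p
        - HD1 (HD1 (uncL L) (HeV j)) (HeX i) p) w q
      = HD1 (HD1 (HD1 (uncL L) (HeV i)) (HeX j)) w q
        - HD1 (HD1 (HD1 (uncL L) (HeV j)) (HeX i)) w q := by
    intro w q
    show fderiv ℝ _ q w = _
    rw [fderiv_fun_sub ((d2 (HeV i) (HeX j)) q) ((d2 (HeV j) (HeX i)) q)]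
    rfl
  have hMdiff : Differentiable ℝ (fun p => HD1 (HD1 (uncL L) (HeV i)) (HeX j) p
      - HD1 (HD1 (uncL L) (HeV j)) (HeX i) p) := (d2 _ _).sub (d2 _ _)
  -- components of Dt4 applied to the difference
  have hT : pT4 (fun t x v a =>
        pV4 (EulerLagrange L i) j t x v a - pV4 (EulerLagrange L j) i t x v a) t x v a
      = 2 * HD1 (fun p => HD1 (HD1 (uncL L) (HeV i)) (HeX j) p
          - HD1 (HD1 (uncL L) (HeV j)) (HeX i) p) (He0 n) (t, x, v) := by
    show deriv (fun s => pV4 (EulerLagrange L i) j s x v a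
      - pV4 (EulerLagrange L j) i s x v a) t = _
    simp only [hVdiff]
    exact ((hasDerivAt_slice_T (hMdiff (t, x, v))).const_mul 2).deriv
  have hXk : ∀ k, pX4 (fun t x v a =>
        pV4 (EulerLagrange L i) j t x v a - pV4 (EulerLagrange L j) i t x v a) k t x v a
      = 2 * HD1 (fun p => HD1 (HD1 (uncL L) (HeV i)) (HeX j) p
          - HD1 (HD1 (uncL L) (HeV j)) (HeX i) p) (HeX k) (t, x, v) := by
    intro k
    show deriv (fun s => pV4 (EulerLagrange L i) j t (Function.update x k s) v a
      - pV4 (EulerLagrange L j) i t (Function.update x k s) v a) (x k) = _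
    simp only [hVdiff]
    exact ((hasDerivAt_slice_X (hMdiff (t, x, v)) k).const_mul 2).deriv
  have hVk : ∀ k, pV4 (fun t x v a =>
        pV4 (EulerLagrange L i) j t x v a - pV4 (EulerLagrange L j) i t x v a) k t x v a
      = 2 * HD1 (fun p => HD1 (HD1 (uncL L) (HeV i)) (HeX j) p
          - HD1 (HD1 (uncL L) (HeV j)) (HeX i) p) (HeV k) (t, x, v) := by
    intro k
    show deriv (fun s => pV4 (EulerLagrange L i) j t x (Function.update v k s) a
      - pV4 (EulerLagrange L j) i t x (Function.update v k s) a) (v k) = _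
    simp only [hVdiff]
    exact ((hasDerivAt_slice_V (hMdiff (t, x, v)) k).const_mul 2).deriv
  -- assemble
  unfold Dt4
  rw [hT, hXexp i j t x v a, hXexp j i t x v a]
  simp only [hXk, hVk, hMder]
  -- canonicalize with symmetry
  have c1 : HD1 (HD1 (HD1 (uncL L) (HeV i)) (He0 n)) (HeX j)
      = HD1 (HD1 (HD1 (uncL L) (HeV i)) (HeX j)) (He0 n) := s23 _ _ _
  have c1' : HD1 (HD1 (HD1 (uncL L) (HeV j)) (He0 n)) (HeX i)
      = HD1 (HD1 (HD1 (uncL L) (HeV j)) (HeX i)) (He0 n) := s23 _ _ _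
  have c2 : ∀ k, HD1 (HD1 (HD1 (uncL L) (HeV i)) (HeX k)) (HeX j)
      = HD1 (HD1 (HD1 (uncL L) (HeV i)) (HeX j)) (HeX k) := fun k => s23 _ _ _
  have c2' : ∀ k, HD1 (HD1 (HD1 (uncL L) (HeV j)) (HeX k)) (HeX i)
      = HD1 (HD1 (HD1 (uncL L) (HeV j)) (HeX i)) (HeX k) := fun k => s23 _ _ _
  have c3 : ∀ k, HD1 (HD1 (HD1 (uncL L) (HeV i)) (HeV k)) (HeX j)
      = HD1 (HD1 (HD1 (uncL L) (HeV i)) (HeX j)) (HeV k) := fun k => s23 _ _ _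
  have c3' : ∀ k, HD1 (HD1 (HD1 (uncL L) (HeV j)) (HeV k)) (HeX i)
      = HD1 (HD1 (HD1 (uncL L) (HeV j)) (HeX i)) (HeV k) := fun k => s23 _ _ _
  simp only [c1, c1', c2, c2', c3, c3', s2 (HeX j) (HeX i)]
  -- sum algebra
  rw [show (∑ k, v k * (2 * (HD1 (HD1 (HD1 (uncL L) (HeV i)) (HeX j)) (HeX k) (t, x, v)
        - HD1 (HD1 (HD1 (uncL L) (HeV j)) (HeX i)) (HeX k) (t, x, v))))
      = 2 * (∑ k, HD1 (HD1 (HD1 (uncL L) (HeV i)) (HeX j)) (HeX k) (t, x, v) * v k)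
        - 2 * (∑ k, HD1 (HD1 (HD1 (uncL L) (HeV j)) (HeX i)) (HeX k) (t, x, v) * v k) from by
    rw [Finset.mul_sum, Finset.mul_sum, ← Finset.sum_sub_distrib]
    exact Finset.sum_congr rfl fun k _ => by ring]
  rw [show (∑ k, a k * (2 * (HD1 (HD1 (HD1 (uncL L) (HeV i)) (HeX j)) (HeV k) (t, x, v)
        - HD1 (HD1 (HD1 (uncL L) (HeV j)) (HeX i)) (HeV k) (t, x, v))))
      = 2 * (∑ k, HD1 (HD1 (HD1 (uncL L) (HeV i)) (HeX j)) (HeV k) (t, x, v) * a k)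
        - 2 * (∑ k, HD1 (HD1 (HD1 (uncL L) (HeV j)) (HeX i)) (HeV k) (t, x, v) * a k) from by
    rw [Finset.mul_sum, Finset.mul_sum, ← Finset.sum_sub_distrib]
    exact Finset.sum_congr rfl fun k _ => by ring]
  ring
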